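/- Let 0 < s < 1, 1 ≤ p < ∞ with sp < 1, and let v_h be a continuous piecewise linear function on the uniform mesh of size h on [0,1]. Then [v_h']_{W^{s,p}(0,1)} ≤ C h^{-s} ‖v_h‖_{W^{1,p}(0,1)}, so in particular v_h ∈ W^{1+s,p}(0,1). -/

import Mathlib

open MeasureTheory Set

lemma measurable_rpow_c (c : ℝ) : Measurable fun x : ℝ => x ^ c :=
  measurable_of_continuousOn_compl_singleton (0 : ℝ)
    (continuousOn_of_forall_continuousAt fun x hx =>
      Real.continuousAt_rpow_const x c (Or.inl hx))

lemma tail_lintegral {q d : ℝ} (hq : 0 < q) (hd : 0 < d) :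
    ∫⁻ t in Ici d, ENNReal.ofReal (t ^ (-1 - q)) ≤ ENNReal.ofReal (d ^ (-q) / q) := by
  have h1 : (-1 - q) < -1 := by linarith
  rw [← Measure.restrict_congr_set Ioi_ae_eq_Ici]
  rw [← ofReal_integral_eq_lintegral_ofReal (integrableOn_Ioi_rpow_of_lt h1 hd) ?_]
  · rw [integral_Ioi_rpow_of_lt h1 hd]
    apply le_of_eq
    rw [show (-1 - q + 1) = -q by ring, neg_div, div_neg, neg_neg]
  · filter_upwards [ae_restrict_mem measurableSet_Ioi] with t ht
    exact Real.rpow_nonneg (le_of_lt (hd.trans ht)) _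

lemma edge_lintegral {q h : ℝ} (hq0 : 0 < q) (hq1 : q < 1) (hh : 0 < h) :
    ∫⁻ t in Ioo (0:ℝ) h, ENNReal.ofReal (t ^ (-q)) ≤ ENNReal.ofReal (h ^ (1 - q) / (1 - q)) := by
  rw [Measure.restrict_congr_set Ioo_ae_eq_Ioc]
  have hint : IntegrableOn (fun t : ℝ => t ^ (-q)) (Ioc 0 h) := by
    have := intervalIntegral.intervalIntegrable_rpow' (a := 0) (b := h) (r := -q) (by linarith)
    rwa [intervalIntegrable_iff_integrableOn_Ioc_of_le hh.le] at this
  rw [← ofReal_integral_eq_lintegral_ofReal hint ?_]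
  · rw [← intervalIntegral.integral_of_le hh.le,
      integral_rpow (Or.inl (by linarith))]
    apply le_of_eq
    rw [Real.zero_rpow (by intro hc; nlinarith : -q + 1 ≠ 0)]
    rw [show (-q + 1) = 1 - q by ring, sub_zero]
  · filter_upwards [ae_restrict_mem measurableSet_Ioc] with t ht
    exact Real.rpow_nonneg ht.1.le _

lemma inner_kernel_bound {q : ℝ} (hq : 0 < q) {x d : ℝ} (hd : 0 < d) :
    ∫⁻ y, ({y : ℝ | d ≤ |x - y|}.indicator fun y => ENNReal.ofReal (|x - y| ^ (-1 - q))) y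
      ≤ ENNReal.ofReal (2 * (d ^ (-q) / q)) := by
  have hm : Measurable fun y : ℝ => ENNReal.ofReal (|x - y| ^ (-1 - q)) :=
    ENNReal.measurable_ofReal.comp
      ((measurable_rpow_c _).comp (measurable_const.sub measurable_id).abs)
  have hpt : ∀ y : ℝ,
      ({y : ℝ | d ≤ |x - y|}.indicator fun y => ENNReal.ofReal (|x - y| ^ (-1 - q))) y
      ≤ (Iic (x - d)).indicator (fun y => ENNReal.ofReal (|x - y| ^ (-1 - q))) y
        + (Ici (x + d)).indicator (fun y => ENNReal.ofReal (|x - y| ^ (-1 - q))) y := by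
    intro y
    by_cases hy : y ∈ {y : ℝ | d ≤ |x - y|}
    · rw [indicator_of_mem hy]
      have hy' : d ≤ |x - y| := hy
      rcases abs_cases (x - y) with ⟨he, _⟩ | ⟨he, _⟩
      · have h1 : y ∈ Iic (x - d) := by
          simp only [mem_Iic]; rw [he] at hy'; linarith
        rw [indicator_of_mem h1]
        exact self_le_add_right _ _
      · have h1 : y ∈ Ici (x + d) := by
          simp only [mem_Ici]; rw [he] at hy'; linarith
        rw [indicator_of_mem h1]
        exact self_le_add_left _ _
    · rw [indicator_of_notMem hy]; exact zero_le
  refine le_trans (lintegral_mono hpt) ?_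
  rw [lintegral_add_left (hm.indicator measurableSet_Iic),
    lintegral_indicator measurableSet_Iic, lintegral_indicator measurableSet_Ici]
  have e1 : ∫⁻ y in Iic (x - d), ENNReal.ofReal (|x - y| ^ (-1 - q))
      = ∫⁻ t in Ici d, ENNReal.ofReal (t ^ (-1 - q)) := by
    rw [setLIntegral_congr_fun measurableSet_Iic 
      (fun y (hy : y ≤ x - d) => by
        rw [abs_of_nonneg (by linarith : (0:ℝ) ≤ x - y)])]
    have mp : MeasurePreserving (fun y : ℝ => x - y) volume volume := by
      have := (measurePreserving_add_left (volume : Measure ℝ) x).comp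
        (Measure.measurePreserving_neg (volume : Measure ℝ))
      simpa [Function.comp_def, sub_eq_add_neg] using this
    have emb : MeasurableEmbedding (fun y : ℝ => x - y) :=
      (MeasurableEquiv.subLeft x).measurableEmbedding
    have hpre : (fun y : ℝ => x - y) ⁻¹' (Ici d) = Iic (x - d) := by
      ext y; simp only [mem_preimage, mem_Ici, mem_Iic]; constructor <;> intro <;> linarith
    rw [← hpre]
    exact mp.setLIntegral_comp_preimage_emb emb (fun t => ENNReal.ofReal (t ^ (-1 - q))) (Ici d)
  have e2 : ∫⁻ y in Ici (x + d), ENNReal.ofReal (|x - y| ^ (-1 - q))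
      = ∫⁻ t in Ici d, ENNReal.ofReal (t ^ (-1 - q)) := by
    rw [setLIntegral_congr_fun measurableSet_Ici 
      (fun y (hy : x + d ≤ y) => by
        rw [abs_of_nonpos (by linarith : x - y ≤ 0), neg_sub])]
    have mp : MeasurePreserving (fun y : ℝ => y - x) volume volume :=
      measurePreserving_sub_right volume x
    have emb : MeasurableEmbedding (fun y : ℝ => y - x) :=
      (MeasurableEquiv.subRight x).measurableEmbedding
    have hpre : (fun y : ℝ => y - x) ⁻¹' (Ici d) = Ici (x + d) := by
      ext y; simp only [mem_preimage, mem_Ici]; constructor <;> intro <;> linarith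
    rw [← hpre]
    exact mp.setLIntegral_comp_preimage_emb emb (fun t => ENNReal.ofReal (t ^ (-1 - q))) (Ici d)
  rw [e1, e2]
  have hc : (0:ℝ) ≤ d ^ (-q) / q := by positivity
  rw [two_mul, ENNReal.ofReal_add hc hc]
  exact add_le_add (tail_lintegral hq hd) (tail_lintegral hq hd)

lemma cell_edge_left {q a b : ℝ} (hq0 : 0 < q) (hq1 : q < 1) (hab : a < b) :
    ∫⁻ x in Ioo a b, ENNReal.ofReal ((x - a) ^ (-q))
      ≤ ENNReal.ofReal ((b - a) ^ (1 - q) / (1 - q)) := by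
  have mp : MeasurePreserving (fun y : ℝ => y - a) volume volume :=
    measurePreserving_sub_right volume a
  have emb : MeasurableEmbedding (fun y : ℝ => y - a) :=
    (MeasurableEquiv.subRight a).measurableEmbedding
  have hpre : (fun y : ℝ => y - a) ⁻¹' (Ioo 0 (b - a)) = Ioo a b := by
    ext y; simp only [mem_preimage, mem_Ioo]; constructor <;> intro ⟨h1, h2⟩ <;>
      constructor <;> linarith
  rw [← hpre]
  rw [mp.setLIntegral_comp_preimage_emb emb (fun t => ENNReal.ofReal (t ^ (-q))) (Ioo 0 (b - a))]
  exact edge_lintegral hq0 hq1 (by linarith)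

lemma cell_edge_right {q a b : ℝ} (hq0 : 0 < q) (hq1 : q < 1) (hab : a < b) :
    ∫⁻ x in Ioo a b, ENNReal.ofReal ((b - x) ^ (-q))
      ≤ ENNReal.ofReal ((b - a) ^ (1 - q) / (1 - q)) := by
  have mp : MeasurePreserving (fun y : ℝ => b - y) volume volume := by
    have := (measurePreserving_add_left (volume : Measure ℝ) b).comp
      (Measure.measurePreserving_neg (volume : Measure ℝ))
    simpa [Function.comp_def, sub_eq_add_neg] using this
  have emb : MeasurableEmbedding (fun y : ℝ => b - y) :=
    (MeasurableEquiv.subLeft b).measurableEmbedding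
  have hpre : (fun y : ℝ => b - y) ⁻¹' (Ioo 0 (b - a)) = Ioo a b := by
    ext y; simp only [mem_preimage, mem_Ioo]; constructor <;> intro ⟨h1, h2⟩ <;>
      constructor <;> linarith
  rw [← hpre]
  rw [mp.setLIntegral_comp_preimage_emb emb (fun t => ENNReal.ofReal (t ^ (-q))) (Ioo 0 (b - a))]
  exact edge_lintegral hq0 hq1 (by linarith)

lemma add_rpow_le_two_rpow {u v pp : ℝ} (hu : 0 ≤ u) (hv : 0 ≤ v) (hp : 0 ≤ pp) :
    (u + v) ^ pp ≤ 2 ^ pp * (u ^ pp + v ^ pp) := by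
  have h1 : (u + v) ^ pp ≤ (2 * max u v) ^ pp := by
    apply Real.rpow_le_rpow (by positivity) _ hp
    rcases le_total u v with hle | hle
    · simp [max_eq_right hle]; linarith
    · simp [max_eq_left hle]; linarith
  have h2 : (2 * max u v) ^ pp = 2 ^ pp * (max u v) ^ pp :=
    Real.mul_rpow (by norm_num) (le_max_of_le_left hu)
  have h3 : (max u v) ^ pp ≤ u ^ pp + v ^ pp := by
    rcases max_cases u v with ⟨he, _⟩ | ⟨he, _⟩ <;> rw [he]
    · nlinarith [Real.rpow_nonneg hv pp]
    · nlinarith [Real.rpow_nonneg hu pp]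
  calc (u + v) ^ pp ≤ 2 ^ pp * (max u v) ^ pp := by rw [← h2]; exact h1
    _ ≤ 2 ^ pp * (u ^ pp + v ^ pp) := by
        apply mul_le_mul_of_nonneg_left h3 (by positivity)

/-- Fractional inverse inequality for derivatives of continuous piecewise linear
functions on the uniform mesh of size `h = 1/N`: for `0 < s < 1`, `1 ≤ p < ∞` with
`sp < 1`, one has `[v_h']_{W^{s,p}(0,1)}^p ≤ (C h^{-s})^p ‖v_h‖_{W^{1,p}(0,1)}^p`;
in particular the Gagliardo seminorm of `v_h'` is finite, i.e. `v_h ∈ W^{1+s,p}(0,1)`. -/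
theorem stmt_8 (s p : ℝ) (hs : 0 < s) (hs1 : s < 1) (hp : 1 ≤ p) (hsp : s * p < 1) :
    ∃ C > 0, ∀ (N : ℕ) (h : ℝ) (v : ℝ → ℝ), 0 < N → h = 1 / (N : ℝ) →
      ContinuousOn v (Icc 0 1) →
      (∀ k : ℕ, k < N → ∃ a b : ℝ,
        ∀ x ∈ Icc ((k : ℝ) * h) (((k : ℝ) + 1) * h), v x = a * x + b) →
      (∫⁻ x in Ioo (0:ℝ) 1, ∫⁻ y in Ioo (0:ℝ) 1,
          ENNReal.ofReal (|deriv v x - deriv v y| ^ p / |x - y| ^ (1 + s * p)))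
        ≤ ENNReal.ofReal ((C * h ^ (-s)) ^ p *
            ∫ x in Ioo (0:ℝ) 1, (|v x| ^ p + |deriv v x| ^ p)) := by
  have hp0 : 0 < p := lt_of_lt_of_le one_pos hp
  set q : ℝ := s * p with hqdef
  have hq0 : 0 < q := mul_pos hs hp0
  have hq1 : q < 1 := hsp
  have h1q : 0 < 1 - q := by linarith
  set c₀ : ℝ := 2 * (2 ^ p * ((2 / q) * (2 / (1 - q)))) with hc₀def
  have hc₀ : 0 < c₀ := by
    apply mul_pos two_pos
    exact mul_pos (Real.rpow_pos_of_pos two_pos p)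
      (mul_pos (div_pos two_pos hq0) (div_pos two_pos h1q))
  refine ⟨c₀ ^ (p⁻¹), Real.rpow_pos_of_pos hc₀ _, ?_⟩
  intro N h v hN hh hv hpl
  have hh0 : 0 < h := by rw [hh]; positivity
  have hNh : (N : ℝ) * h = 1 := by
    rw [hh]; field_simp
  -- slopes
  obtain ⟨A, hA⟩ : ∃ A : ℕ → ℝ, ∀ k, k < N →
      ∀ x ∈ Ioo ((k:ℝ) * h) (((k:ℝ) + 1) * h), deriv v x = A k := by
    choose a b hab using hpl
    refine ⟨fun k => if hk : k < N then a k hk else 0, fun k hk x hx => ?_⟩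
    dsimp only
    rw [dif_pos hk]
    have heq : v =ᶠ[nhds x] fun t => a k hk * t + b k hk :=
      Filter.eventuallyEq_of_mem (Ioo_mem_nhds hx.1 hx.2)
        (fun t ht => hab k hk t (Ioo_subset_Icc_self ht))
    rw [heq.deriv_eq]
    have : HasDerivAt (fun t : ℝ => a k hk * t + b k hk) (a k hk) x := by
      simpa using ((hasDerivAt_id x).const_mul (a k hk)).add_const (b k hk)
    exact this.deriv
  set E : ℕ → Set ℝ := fun k => Ioo ((k:ℝ) * h) (((k:ℝ) + 1) * h) with hEdef
  have hEmeas : ∀ k, MeasurableSet (E k) := fun k => measurableSet_Ioo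
  have hEsub : ∀ k, k < N → E k ⊆ Ioo 0 1 := by
    intro k hk x hx
    constructor
    · have : (0:ℝ) ≤ (k:ℝ) * h := by positivity
      linarith [hx.1]
    · have hkN : ((k:ℝ) + 1) ≤ (N:ℝ) := by exact_mod_cast Nat.succ_le_of_lt hk
      have : ((k:ℝ) + 1) * h ≤ (N:ℝ) * h := mul_le_mul_of_nonneg_right hkN hh0.le
      rw [hNh] at this
      linarith [hx.2]
  have hEdisj : ∀ k j : ℕ, k ≠ j → Disjoint (E k) (E j) := by
    have key : ∀ k j : ℕ, k < j → Disjoint (E k) (E j) := by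
      intro k j hkj
      rw [Set.disjoint_left]
      rintro x ⟨_, hx2⟩ ⟨hx3, _⟩
      have h1 : ((k:ℝ) + 1) ≤ (j:ℝ) := by exact_mod_cast Nat.succ_le_of_lt hkj
      have : ((k:ℝ) + 1) * h ≤ (j:ℝ) * h := mul_le_mul_of_nonneg_right h1 hh0.le
      linarith
    intro k j hkj
    rcases lt_or_gt_of_ne hkj with hlt | hgt
    · exact key k j hlt
    · exact (key j k hgt).symm
  set R : Set ℝ := Set.range (fun k : ℕ => (k:ℝ) * h) with hRdef
  have hRnull : volume R = 0 := (Set.countable_range _).measure_zero _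
  have hcover : Ioo (0:ℝ) 1 ⊆ (⋃ k ∈ Finset.range N, E k) ∪ R := by
    intro x hx
    by_cases hxR : x ∈ R
    · exact Or.inr hxR
    left
    set k := ⌊x / h⌋₊ with hkdef
    have hx0 : 0 < x := hx.1
    have hkle : (k:ℝ) * h ≤ x := by
      have := Nat.floor_le (by positivity : (0:ℝ) ≤ x / h)
      calc (k:ℝ) * h ≤ (x / h) * h := mul_le_mul_of_nonneg_right this hh0.le
        _ = x := by field_simp
    have hklt : x < ((k:ℝ) + 1) * h := by
      have := Nat.lt_floor_add_one (x / h)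
      calc x = (x / h) * h := by field_simp
        _ < ((k:ℝ) + 1) * h := by
            apply mul_lt_mul_of_pos_right _ hh0
            exact_mod_cast this
    have hkN : k < N := by
      by_contra hcon
      push_neg at hcon
      have : (N:ℝ) * h ≤ (k:ℝ) * h :=
        mul_le_mul_of_nonneg_right (by exact_mod_cast hcon) hh0.le
      rw [hNh] at this
      linarith [hx.2]
    have hne : (k:ℝ) * h ≠ x := fun hc => hxR ⟨k, hc⟩
    refine Set.mem_biUnion (Finset.mem_range.2 hkN) ⟨lt_of_le_of_ne hkle hne, hklt⟩
  -- definitions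
  set g : ℝ → ℝ := deriv v with hgdef
  have mg : Measurable g := measurable_deriv v
  set P : ℝ → ENNReal := fun x => ENNReal.ofReal (2 ^ p * |g x| ^ p) with hPdef
  have mP : Measurable P :=
    ENNReal.measurable_ofReal.comp (measurable_const.mul ((measurable_rpow_c p).comp mg.abs))
  set W : Set (ℝ × ℝ) := ⋃ k ∈ Finset.range N, (E k) ×ˢ (E k) with hWdef
  have mW : MeasurableSet W :=
    Finset.measurableSet_biUnion _ (fun k _ => (hEmeas k).prod (hEmeas k))
  set K : ℝ × ℝ → ENNReal :=
    Wᶜ.indicator (fun z => ENNReal.ofReal (|z.1 - z.2| ^ (-1 - q))) with hKdef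
  have mker : Measurable fun z : ℝ × ℝ => ENNReal.ofReal (|z.1 - z.2| ^ (-1 - q)) :=
    ENNReal.measurable_ofReal.comp
      ((measurable_rpow_c _).comp (measurable_fst.sub measurable_snd).abs)
  have mK : Measurable K := mker.indicator mW.compl
  have hKsymm : ∀ z w : ℝ, K (z, w) = K (w, z) := by
    intro z w
    have hmem : ((z, w) ∈ Wᶜ) ↔ ((w, z) ∈ Wᶜ) := by
      simp only [Set.mem_compl_iff, hWdef, Set.mem_iUnion, Set.mem_prod]
      constructor <;> intro hz hc <;> apply hz <;>
        obtain ⟨k, hk, h1, h2⟩ := hc <;> exact ⟨k, hk, h2, h1⟩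
    rw [hKdef]
    by_cases hzw : (z, w) ∈ Wᶜ
    · rw [indicator_of_mem hzw, indicator_of_mem (hmem.1 hzw)]
      simp [abs_sub_comm]
    · rw [indicator_of_notMem hzw, indicator_of_notMem (fun hc => hzw (hmem.2 hc))]
  have hae : ∀ᵐ x ∂(volume.restrict (Ioo (0:ℝ) 1)), ∃ k, k < N ∧ x ∈ E k := by
    have h1 : ∀ᵐ x ∂(volume.restrict (Ioo (0:ℝ) 1)), x ∈ Ioo (0:ℝ) 1 :=
      ae_restrict_mem measurableSet_Ioo
    have h2 : ∀ᵐ x ∂(volume.restrict (Ioo (0:ℝ) 1)), x ∉ R := by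
      apply ae_restrict_of_ae
      rw [ae_iff]
      simpa [not_not] using hRnull
    filter_upwards [h1, h2] with x hx hxR
    have := (hcover hx).resolve_right hxR
    rw [Set.mem_iUnion₂] at this
    obtain ⟨k, hk, hxk⟩ := this
    exact ⟨k, Finset.mem_range.1 hk, hxk⟩
  -- Step 1: pointwise domination
  have step1 : (∫⁻ x in Ioo (0:ℝ) 1, ∫⁻ y in Ioo (0:ℝ) 1,
      ENNReal.ofReal (|g x - g y| ^ p / |x - y| ^ (1 + q)))
      ≤ ∫⁻ x in Ioo (0:ℝ) 1, ∫⁻ y in Ioo (0:ℝ) 1,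
        (P x * K (x, y) + P y * K (x, y)) := by
    apply lintegral_mono_ae
    filter_upwards [hae] with x ⟨k, hk, hxk⟩
    apply lintegral_mono_ae
    filter_upwards [hae] with y ⟨j, hj, hyj⟩
    by_cases hW : (x, y) ∈ W
    · -- same cell: numerator is zero, kernel vanishes
      obtain ⟨m, hxm, hmN, hym⟩ : ∃ m, x ∈ E m ∧ m < N ∧ y ∈ E m := by
        simpa [hWdef, Set.mem_iUnion, Set.mem_prod] using hW
      have hgx : g x = A m := hA m hmN x hxm
      have hgy : g y = A m := hA m hmN y hym
      rw [hgx, hgy, sub_self, abs_zero, Real.zero_rpow hp0.ne', zero_div]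
      simp
    · -- different cells
      have hKval : K (x, y) = ENNReal.ofReal (|x - y| ^ (-1 - q)) := by
        rw [hKdef]
        exact indicator_of_mem (Set.mem_compl hW) _
      have hkj : k ≠ j := by
        intro hc
        subst hc
        exact hW (Set.mem_biUnion (Finset.mem_range.2 hk) ⟨hxk, hyj⟩)
      have hxy : x ≠ y := fun hc =>
        Set.disjoint_left.1 (hEdisj k j hkj) hxk (hc ▸ hyj)
      have habs : 0 < |x - y| := abs_pos.2 (sub_ne_zero.2 hxy)
      have hden : 0 < |x - y| ^ (1 + q) := Real.rpow_pos_of_pos habs _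
      have hnum : |g x - g y| ^ p ≤ 2 ^ p * |g x| ^ p + 2 ^ p * |g y| ^ p := by
        have t1 : |g x - g y| ^ p ≤ (|g x| + |g y|) ^ p :=
          Real.rpow_le_rpow (abs_nonneg _) (abs_sub _ _) hp0.le
        have t2 := add_rpow_le_two_rpow (abs_nonneg (g x)) (abs_nonneg (g y)) hp0.le
        calc |g x - g y| ^ p ≤ (|g x| + |g y|) ^ p := t1
          _ ≤ 2 ^ p * (|g x| ^ p + |g y| ^ p) := t2
          _ = 2 ^ p * |g x| ^ p + 2 ^ p * |g y| ^ p := by ring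
      have hreal : |g x - g y| ^ p / |x - y| ^ (1 + q)
          ≤ (2 ^ p * |g x| ^ p + 2 ^ p * |g y| ^ p) * |x - y| ^ (-1 - q) := by
        rw [show (-1 - q) = -(1 + q) by ring, Real.rpow_neg (abs_nonneg _),
          ← div_eq_mul_inv]
        gcongr
      calc ENNReal.ofReal (|g x - g y| ^ p / |x - y| ^ (1 + q))
          ≤ ENNReal.ofReal ((2 ^ p * |g x| ^ p + 2 ^ p * |g y| ^ p) * |x - y| ^ (-1 - q)) :=
            ENNReal.ofReal_le_ofReal hreal
        _ = ENNReal.ofReal (2 ^ p * |g x| ^ p + 2 ^ p * |g y| ^ p)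
              * ENNReal.ofReal (|x - y| ^ (-1 - q)) :=
            ENNReal.ofReal_mul (by positivity)
        _ = (P x + P y) * K (x, y) := by
            rw [hKval, ENNReal.ofReal_add (by positivity) (by positivity)]
        _ = P x * K (x, y) + P y * K (x, y) := by ring
  set κ : ℝ → ENNReal := fun x => ∫⁻ y in Ioo (0:ℝ) 1, K (x, y) with hκdef
  have mκ : Measurable κ := Measurable.lintegral_prod_right (f := fun x y => K (x, y)) mK
  set S : ENNReal := ∫⁻ x in Ioo (0:ℝ) 1, P x * κ x with hSdef
  -- Step 2: split the sum
  have step2 : (∫⁻ x in Ioo (0:ℝ) 1, ∫⁻ y in Ioo (0:ℝ) 1,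
      (P x * K (x, y) + P y * K (x, y)))
      = S + ∫⁻ x in Ioo (0:ℝ) 1, ∫⁻ y in Ioo (0:ℝ) 1, P y * K (x, y) := by
    have inner_split : ∀ x : ℝ, (∫⁻ y in Ioo (0:ℝ) 1, (P x * K (x, y) + P y * K (x, y)))
        = P x * κ x + ∫⁻ y in Ioo (0:ℝ) 1, P y * K (x, y) := by
      intro x
      have m1 : Measurable fun y : ℝ => P x * K (x, y) :=
        measurable_const.mul (mK.comp measurable_prodMk_left)
      have m2 : Measurable fun y : ℝ => K (x, y) := mK.comp measurable_prodMk_left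
      rw [lintegral_add_left m1, lintegral_const_mul _ m2]
    rw [lintegral_congr inner_split,
      lintegral_add_left (f := fun x => P x * κ x) (mP.mul mκ)]
  -- Step 3: swap and symmetrize the second term
  have step3 : (∫⁻ x in Ioo (0:ℝ) 1, ∫⁻ y in Ioo (0:ℝ) 1, P y * K (x, y)) = S := by
    have hswap := lintegral_lintegral_swap (μ := volume.restrict (Ioo (0:ℝ) 1))
      (ν := volume.restrict (Ioo (0:ℝ) 1)) (f := fun x y => P y * K (x, y))
      ((mP.comp measurable_snd).mul mK).aemeasurable
    rw [hswap]
    apply lintegral_congr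
    intro y
    have m2 : Measurable fun x : ℝ => K (x, y) := mK.comp measurable_prodMk_right
    rw [lintegral_const_mul _ m2]
    congr 1
    exact lintegral_congr fun x => hKsymm x y
  -- Step 5: per-cell bound
  have cellbound : ∀ k, k < N → (∫⁻ x in E k, P x * κ x)
      ≤ ENNReal.ofReal ((2 ^ p * ((2 / q) * (2 / (1 - q)))) * h ^ (1 - q) * |A k| ^ p) := by
    intro k hk
    have hbound : ∀ x ∈ E k, P x * κ x
        ≤ ENNReal.ofReal (2 ^ p * |A k| ^ p) * (ENNReal.ofReal (2 / q)
            * ENNReal.ofReal ((min (x - (k:ℝ) * h) (((k:ℝ) + 1) * h - x)) ^ (-q))) := by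
      intro x hx
      have hPx : P x = ENNReal.ofReal (2 ^ p * |A k| ^ p) := by
        rw [hPdef]; dsimp only; rw [hA k hk x hx]
      set d := min (x - (k:ℝ) * h) (((k:ℝ) + 1) * h - x) with hddef
      have hd0 : 0 < d := lt_min (by linarith [hx.1]) (by linarith [hx.2])
      have hκx : κ x ≤ ENNReal.ofReal (2 * (d ^ (-q) / q)) := by
        have hKle : ∀ y : ℝ, K (x, y)
            ≤ ({y : ℝ | d ≤ |x - y|}.indicator fun y => ENNReal.ofReal (|x - y| ^ (-1 - q))) y := by
          intro y
          rw [hKdef]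
          by_cases hWxy : (x, y) ∈ Wᶜ
          · rw [indicator_of_mem hWxy]
            have hyE : y ∉ E k := fun hy =>
              hWxy (Set.mem_biUnion (Finset.mem_range.2 hk) (Set.mk_mem_prod hx hy))
            have hdist : y ∈ {y : ℝ | d ≤ |x - y|} := by
              rw [Set.mem_setOf_eq]
              rw [hEdef] at hyE
              simp only [Set.mem_Ioo, not_and_or, not_lt] at hyE
              rcases hyE with h1 | h2
              · exact le_trans (le_trans (min_le_left _ _) (by linarith)) (le_abs_self _)
              · exact le_trans (le_trans (min_le_right _ _) (by linarith)) (neg_le_abs _)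
            rw [indicator_of_mem hdist]
          · rw [indicator_of_notMem hWxy]
            exact zero_le
        calc κ x ≤ ∫⁻ y in Ioo (0:ℝ) 1,
              ({y : ℝ | d ≤ |x - y|}.indicator fun y => ENNReal.ofReal (|x - y| ^ (-1 - q))) y := by
              rw [hκdef]; exact lintegral_mono hKle
          _ ≤ ∫⁻ y, ({y : ℝ | d ≤ |x - y|}.indicator
                fun y => ENNReal.ofReal (|x - y| ^ (-1 - q))) y := setLIntegral_le_lintegral _ _
          _ ≤ ENNReal.ofReal (2 * (d ^ (-q) / q)) := inner_kernel_bound hq0 hd0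
      rw [hPx]
      apply mul_le_mul_right _ _
      calc κ x ≤ ENNReal.ofReal (2 * (d ^ (-q) / q)) := hκx
        _ = ENNReal.ofReal ((2 / q) * d ^ (-q)) := by rw [mul_div_assoc']; ring_nf
        _ = ENNReal.ofReal (2 / q) * ENNReal.ofReal (d ^ (-q)) :=
            ENNReal.ofReal_mul (by positivity)
    have hm1 : Measurable fun x : ℝ =>
        ENNReal.ofReal ((min (x - (k:ℝ) * h) (((k:ℝ) + 1) * h - x)) ^ (-q)) :=
      ENNReal.measurable_ofReal.comp ((measurable_rpow_c _).comp
        ((measurable_id.sub measurable_const).min (measurable_const.sub measurable_id)))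
    calc (∫⁻ x in E k, P x * κ x)
        ≤ ∫⁻ x in E k, ENNReal.ofReal (2 ^ p * |A k| ^ p) * (ENNReal.ofReal (2 / q)
            * ENNReal.ofReal ((min (x - (k:ℝ) * h) (((k:ℝ) + 1) * h - x)) ^ (-q))) := by
          apply lintegral_mono_ae
          filter_upwards [ae_restrict_mem (hEmeas k)] with x hx using hbound x hx
      _ = ENNReal.ofReal (2 ^ p * |A k| ^ p) * (ENNReal.ofReal (2 / q)
            * ∫⁻ x in E k, ENNReal.ofReal ((min (x - (k:ℝ) * h) (((k:ℝ) + 1) * h - x)) ^ (-q))) := by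
          have m3 : Measurable fun x : ℝ => ENNReal.ofReal (2 / q)
              * ENNReal.ofReal ((min (x - (k:ℝ) * h) (((k:ℝ) + 1) * h - x)) ^ (-q)) :=
            measurable_const.mul hm1
          rw [lintegral_const_mul _ m3, lintegral_const_mul _ hm1]
      _ ≤ ENNReal.ofReal (2 ^ p * |A k| ^ p) * (ENNReal.ofReal (2 / q)
            * ENNReal.ofReal (2 * (h ^ (1 - q) / (1 - q)))) := by
          apply mul_le_mul_right
          apply mul_le_mul_right
          calc (∫⁻ x in E k, ENNReal.ofReal ((min (x - (k:ℝ) * h) (((k:ℝ) + 1) * h - x)) ^ (-q)))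
              ≤ ∫⁻ x in E k, (ENNReal.ofReal ((x - (k:ℝ) * h) ^ (-q))
                  + ENNReal.ofReal ((((k:ℝ) + 1) * h - x) ^ (-q))) := by
                apply lintegral_mono
                intro x
                dsimp only
                rcases min_cases (x - (k:ℝ) * h) (((k:ℝ) + 1) * h - x) with ⟨he, _⟩ | ⟨he, _⟩ <;>
                  rw [he]
                · exact self_le_add_right _ _
                · exact self_le_add_left _ _
            _ = (∫⁻ x in E k, ENNReal.ofReal ((x - (k:ℝ) * h) ^ (-q)))
                  + ∫⁻ x in E k, ENNReal.ofReal ((((k:ℝ) + 1) * h - x) ^ (-q)) :=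
                lintegral_add_left (ENNReal.measurable_ofReal.comp ((measurable_rpow_c _).comp
                  (measurable_id.sub measurable_const))) _
            _ ≤ ENNReal.ofReal (h ^ (1 - q) / (1 - q)) + ENNReal.ofReal (h ^ (1 - q) / (1 - q)) := by
                have hab : (k:ℝ) * h < ((k:ℝ) + 1) * h := by nlinarith
                have hba : ((k:ℝ) + 1) * h - (k:ℝ) * h = h := by ring
                have e1 := cell_edge_left (a := (k:ℝ) * h) (b := ((k:ℝ) + 1) * h) hq0 hq1 hab
                have e2 := cell_edge_right (a := (k:ℝ) * h) (b := ((k:ℝ) + 1) * h) hq0 hq1 hab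
                rw [hba] at e1 e2
                exact add_le_add e1 e2
            _ = ENNReal.ofReal (2 * (h ^ (1 - q) / (1 - q))) := by
                rw [two_mul, ENNReal.ofReal_add (by positivity) (by positivity)]
      _ = ENNReal.ofReal ((2 ^ p * ((2 / q) * (2 / (1 - q)))) * h ^ (1 - q) * |A k| ^ p) := by
          rw [← ENNReal.ofReal_mul (by positivity), ← ENNReal.ofReal_mul (by positivity)]
          congr 1
          ring
  -- Step 4: decompose S over the cells
  have hPD : Set.PairwiseDisjoint (↑(Finset.range N) : Set ℕ) E :=
    fun k _ j _ hkj => hEdisj k j hkj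
  have step4 : S ≤ ∑ k ∈ Finset.range N,
      ENNReal.ofReal ((2 ^ p * ((2 / q) * (2 / (1 - q)))) * h ^ (1 - q) * |A k| ^ p) := by
    calc S ≤ ∫⁻ x in (⋃ k ∈ Finset.range N, E k) ∪ R, P x * κ x := lintegral_mono_set hcover
      _ ≤ (∫⁻ x in ⋃ k ∈ Finset.range N, E k, P x * κ x) + ∫⁻ x in R, P x * κ x :=
          lintegral_union_le _ _ _
      _ = ∫⁻ x in ⋃ k ∈ Finset.range N, E k, P x * κ x := by
          rw [setLIntegral_measure_zero _ _ hRnull, add_zero]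
      _ = ∑ k ∈ Finset.range N, ∫⁻ x in E k, P x * κ x :=
          lintegral_biUnion_finset hPD (fun k _ => hEmeas k) _
      _ ≤ ∑ k ∈ Finset.range N,
          ENNReal.ofReal ((2 ^ p * ((2 / q) * (2 / (1 - q)))) * h ^ (1 - q) * |A k| ^ p) :=
          Finset.sum_le_sum (fun k hk => cellbound k (Finset.mem_range.1 hk))
  -- integrability on (0,1)
  haveI hfin : IsFiniteMeasure (volume.restrict (Ioo (0:ℝ) 1)) :=
    ⟨by rw [Measure.restrict_apply_univ]; rw [Real.volume_Ioo]; simp⟩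
  have int_g : IntegrableOn (fun x => |g x| ^ p) (Ioo (0:ℝ) 1) := by
    refine ⟨((measurable_rpow_c p).comp mg.abs).aestronglyMeasurable, ?_⟩
    apply HasFiniteIntegral.of_bounded (C := ∑ k ∈ Finset.range N, |A k| ^ p)
    filter_upwards [hae] with x ⟨k, hk, hxk⟩
    rw [Real.norm_eq_abs, abs_of_nonneg (Real.rpow_nonneg (abs_nonneg _) p), hA k hk x hxk]
    exact Finset.single_le_sum (fun j _ => Real.rpow_nonneg (abs_nonneg _) p)
      (Finset.mem_range.2 hk)
  have int_v : IntegrableOn (fun x => |v x| ^ p) (Ioo (0:ℝ) 1) := by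
    obtain ⟨M, hM⟩ := isCompact_Icc.exists_bound_of_continuousOn hv
    refine ⟨?_, ?_⟩
    · have hvm : AEMeasurable v (volume.restrict (Ioo (0:ℝ) 1)) :=
        (hv.mono Ioo_subset_Icc_self).aemeasurable measurableSet_Ioo
      exact ((measurable_rpow_c p).comp_aemeasurable
        (continuous_abs.measurable.comp_aemeasurable hvm)).aestronglyMeasurable
    · apply HasFiniteIntegral.of_bounded (C := M ^ p)
      filter_upwards [ae_restrict_mem measurableSet_Ioo] with x hx
      rw [Real.norm_eq_abs, abs_of_nonneg (Real.rpow_nonneg (abs_nonneg _) p)]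
      exact Real.rpow_le_rpow (abs_nonneg _)
        (by simpa [Real.norm_eq_abs] using hM x (Ioo_subset_Icc_self hx)) hp0.le
  -- Step 7: the L^p norm of the derivative bounds the sum of slopes
  have sumJ : (∑ k ∈ Finset.range N, ENNReal.ofReal (|A k| ^ p * h))
      ≤ ENNReal.ofReal (∫ x in Ioo (0:ℝ) 1, (|v x| ^ p + |g x| ^ p)) := by
    have e1 : ∀ k ∈ Finset.range N,
        ENNReal.ofReal (|A k| ^ p * h) = ∫⁻ x in E k, ENNReal.ofReal (|g x| ^ p) := by
      intro k hk
      rw [setLIntegral_congr_fun (hEmeas k) (fun x hx => by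
        rw [hA k (Finset.mem_range.1 hk) x hx]), setLIntegral_const]
      have : volume (E k) = ENNReal.ofReal h := by
        rw [hEdef]; dsimp only; rw [Real.volume_Ioo,
          show ((k:ℝ) + 1) * h - (k:ℝ) * h = h by ring]
      rw [this, ← ENNReal.ofReal_mul (by positivity)]
    calc (∑ k ∈ Finset.range N, ENNReal.ofReal (|A k| ^ p * h))
        = ∑ k ∈ Finset.range N, ∫⁻ x in E k, ENNReal.ofReal (|g x| ^ p) :=
          Finset.sum_congr rfl e1
      _ = ∫⁻ x in ⋃ k ∈ Finset.range N, E k, ENNReal.ofReal (|g x| ^ p) :=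
          (lintegral_biUnion_finset hPD (fun k _ => hEmeas k) _).symm
      _ ≤ ∫⁻ x in Ioo (0:ℝ) 1, ENNReal.ofReal (|g x| ^ p) :=
          lintegral_mono_set (Set.iUnion₂_subset (fun k hk => hEsub k (Finset.mem_range.1 hk)))
      _ = ENNReal.ofReal (∫ x in Ioo (0:ℝ) 1, |g x| ^ p) :=
          (ofReal_integral_eq_lintegral_ofReal int_g
            (ae_of_all _ fun x => Real.rpow_nonneg (abs_nonneg _) p)).symm
      _ ≤ ENNReal.ofReal (∫ x in Ioo (0:ℝ) 1, (|v x| ^ p + |g x| ^ p)) :=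
          ENNReal.ofReal_le_ofReal (integral_mono int_g (int_v.add int_g)
            (fun x => le_add_of_nonneg_left (Real.rpow_nonneg (abs_nonneg _) p)))
  -- final assembly
  have hpow : h ^ (1 - q) = h ^ (-q) * h := by
    rw [show (1:ℝ) - q = -q + 1 by ring, Real.rpow_add hh0, Real.rpow_one]
  have hCp : ((c₀ ^ p⁻¹) * h ^ (-s)) ^ p = c₀ * h ^ (-q) := by
    rw [Real.mul_rpow (Real.rpow_nonneg hc₀.le _) (Real.rpow_nonneg hh0.le _),
      ← Real.rpow_mul hc₀.le, ← Real.rpow_mul hh0.le, inv_mul_cancel₀ hp0.ne',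
      Real.rpow_one, show -s * p = -q by rw [hqdef]; ring]
  calc (∫⁻ x in Ioo (0:ℝ) 1, ∫⁻ y in Ioo (0:ℝ) 1,
      ENNReal.ofReal (|g x - g y| ^ p / |x - y| ^ (1 + q)))
      ≤ ∫⁻ x in Ioo (0:ℝ) 1, ∫⁻ y in Ioo (0:ℝ) 1,
        (P x * K (x, y) + P y * K (x, y)) := step1
    _ = S + S := by rw [step2, step3]
    _ ≤ (∑ k ∈ Finset.range N,
          ENNReal.ofReal ((2 ^ p * ((2 / q) * (2 / (1 - q)))) * h ^ (1 - q) * |A k| ^ p))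
        + ∑ k ∈ Finset.range N,
          ENNReal.ofReal ((2 ^ p * ((2 / q) * (2 / (1 - q)))) * h ^ (1 - q) * |A k| ^ p) :=
        add_le_add step4 step4
    _ = ∑ k ∈ Finset.range N, ENNReal.ofReal (c₀ * h ^ (-q)) * ENNReal.ofReal (|A k| ^ p * h) := by
        rw [← Finset.sum_add_distrib]
        apply Finset.sum_congr rfl
        intro k _
        rw [← ENNReal.ofReal_mul (by positivity),
          ← ENNReal.ofReal_add (by positivity) (by positivity)]
        congr 1
        rw [hc₀def, hpow]
        ring
    _ = ENNReal.ofReal (c₀ * h ^ (-q)) * ∑ k ∈ Finset.range N, ENNReal.ofReal (|A k| ^ p * h) :=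
        (Finset.mul_sum _ _ _).symm
    _ ≤ ENNReal.ofReal (c₀ * h ^ (-q))
        * ENNReal.ofReal (∫ x in Ioo (0:ℝ) 1, (|v x| ^ p + |g x| ^ p)) :=
        mul_le_mul_right sumJ _
    _ = ENNReal.ofReal ((c₀ ^ p⁻¹ * h ^ (-s)) ^ p
          * ∫ x in Ioo (0:ℝ) 1, (|v x| ^ p + |g x| ^ p)) := by
        rw [hCp]
        exact (ENNReal.ofReal_mul (mul_nonneg hc₀.le (Real.rpow_nonneg hh0.le _))).symm
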